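/- Let l ≥ 1. Suppose f_1,…,f_l : ℂ^l → ℂ and F : ℂ^l → ℂ is real-differentiable satisfying (H3), and suppose (H4) holds with positive constants σ_1,…,σ_l. Then for every θ ∈ ℝ and every z = (z_1,…,z_l) ∈ ℂ^l, Re F(e^{iσ_1θ/2} z_1, …, e^{iσ_lθ/2} z_l) = Re F(z_1,…,z_l). -/

import Mathlib

open Complex Finset

/-- The Wirtinger derivative `∂/∂z_m` of a real-differentiable function `f : ℂ^l → ℂ`. -/
noncomputable def wD {l : ℕ} (f : (Fin l → ℂ) → ℂ) (z : Fin l → ℂ) (m : Fin l) : ℂ :=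
  (1 / 2 : ℂ) *
    ((fderiv ℝ f z) (Pi.single m 1) - Complex.I * (fderiv ℝ f z) (Pi.single m Complex.I))

/-- The Wirtinger derivative `∂/∂z̄_m` of a real-differentiable function `f : ℂ^l → ℂ`. -/
noncomputable def wDbar {l : ℕ} (f : (Fin l → ℂ) → ℂ) (z : Fin l → ℂ) (m : Fin l) : ℂ :=
  (1 / 2 : ℂ) *
    ((fderiv ℝ f z) (Pi.single m 1) + Complex.I * (fderiv ℝ f z) (Pi.single m Complex.I))

/-- Value of a real-linear map on `Pi.single`, in terms of Wirtinger-type combinations. -/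
lemma aux_single {l : ℕ} (L : (Fin l → ℂ) →L[ℝ] ℂ) (k : Fin l) (w : ℂ) :
    L (Pi.single k w) =
      (1/2 : ℂ) * (L (Pi.single k 1) - I * L (Pi.single k I)) * w +
      (1/2 : ℂ) * (L (Pi.single k 1) + I * L (Pi.single k I)) * (starRingEnd ℂ w) := by
  have h : Pi.single k w = w.re • (Pi.single k (1:ℂ) : Fin l → ℂ)
      + w.im • (Pi.single k Complex.I : Fin l → ℂ) := by
    rw [← Pi.single_smul, ← Pi.single_smul, ← Pi.single_add]
    simp [Complex.real_smul]
  rw [h, map_add, map_smul, map_smul]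
  set A := L (Pi.single k 1)
  set B := L (Pi.single k I)
  rw [Complex.real_smul, Complex.real_smul]
  apply Complex.ext <;>
    simp [Complex.mul_re, Complex.mul_im, Complex.add_re, Complex.add_im] <;> ring

lemma aux_decomp {l : ℕ} (L : (Fin l → ℂ) →L[ℝ] ℂ) (v : Fin l → ℂ) :
    L v = ∑ k, L (Pi.single k (v k)) := by
  conv_lhs => rw [← Finset.univ_sum_single v]
  exact map_sum L _ _

theorem statement10 (l : ℕ) (hl : 1 ≤ l)
    (f : Fin l → (Fin l → ℂ) → ℂ)
    (F : (Fin l → ℂ) → ℂ) (hF : Differentiable ℝ F)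
    (hH3 : ∀ (z : Fin l → ℂ) (k : Fin l),
      f k z = wDbar F z k + starRingEnd ℂ (wD F z k))
    (σ : Fin l → ℝ) (hσ : ∀ k, 0 < σ k)
    (hH4 : ∀ z : Fin l → ℂ,
      (∑ k, (σ k : ℂ) * (f k z * starRingEnd ℂ (z k))).im = 0) :
    ∀ (θ : ℝ) (z : Fin l → ℂ),
      (F (fun k => Complex.exp (Complex.I * ((σ k * θ / 2 : ℝ) : ℂ)) * z k)).re =
        (F z).re := by
  simp only [wD, wDbar] at hH3
  intro θ z
  set u : ℝ → (Fin l → ℂ) := fun t k => Complex.exp (Complex.I * ((σ k * t / 2 : ℝ) : ℂ)) * z k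
    with hu_def
  set g : ℝ → ℝ := fun t => (F (u t)).re with hg_def
  have hderiv : ∀ t : ℝ, HasDerivAt g 0 t := by
    intro t
    have hu : HasDerivAt u (fun k => Complex.I * ((σ k / 2 : ℝ) : ℂ) * u t k) t := by
      rw [hasDerivAt_pi]
      intro k
      have h1 : HasDerivAt (fun s : ℝ => (Complex.I * ((σ k * s / 2 : ℝ) : ℂ)))
          (Complex.I * ((σ k / 2 : ℝ) : ℂ)) t := by
        have h0 : (fun s : ℝ => (Complex.I * ((σ k * s / 2 : ℝ) : ℂ))) =
            fun s : ℝ => (Complex.I * ((σ k / 2 : ℝ) : ℂ)) * (s : ℂ) := by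
          funext s; push_cast; ring
        rw [h0]
        simpa using (Complex.ofRealCLM.hasDerivAt (x := t)).const_mul
          (Complex.I * ((σ k / 2 : ℝ) : ℂ))
      have h2 := (h1.cexp).mul_const (z k)
      convert h2 using 1
      · rfl
      simp only [hu_def]
      ring
    have hL := (hF (u t)).hasFDerivAt.comp_hasDerivAt t hu
    have hre := (Complex.reCLM.hasFDerivAt.comp_hasDerivAt t hL)
    have key : Complex.reCLM ((fderiv ℝ F (u t))
        (fun k => Complex.I * ((σ k / 2 : ℝ) : ℂ) * u t k)) = 0 := by
      set L := fderiv ℝ F (u t)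
      have hd := aux_decomp L (fun k => Complex.I * ((σ k / 2 : ℝ) : ℂ) * u t k)
      simp only [reCLM_apply, hd, Complex.re_sum]
      have h4 := hH4 (u t)
      rw [Complex.im_sum] at h4
      have : ∀ k : Fin l, (L (Pi.single k (Complex.I * ((σ k / 2 : ℝ) : ℂ) * u t k))).re
          = (1/2) * ((σ k : ℂ) * (f k (u t) * starRingEnd ℂ (u t k))).im := by
        intro k
        rw [aux_single L, hH3 (u t) k]
        have hc : (starRingEnd ℂ) (1/2 : ℂ) = 1/2 := by
          rw [map_div₀, map_one, map_ofNat]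
        have hc2 : (starRingEnd ℂ) (2 : ℂ) = 2 := map_ofNat _ 2
        simp only [map_mul, map_add, map_sub, hc, hc2,
          Complex.conj_I, Complex.conj_conj, Complex.conj_ofReal]
        simp [Complex.mul_re, Complex.mul_im, Complex.add_re, Complex.add_im,
          Complex.sub_re, Complex.sub_im, Complex.conj_re, Complex.conj_im]
        ring
      calc ∑ i : Fin l, (L (Pi.single i (Complex.I * ((σ i / 2 : ℝ) : ℂ) * u t i))).re
          = ∑ i : Fin l, (1/2) * ((σ i : ℂ) * (f i (u t) * starRingEnd ℂ (u t i))).im :=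
            Finset.sum_congr rfl (fun k _ => this k)
        _ = (1/2) * ∑ i : Fin l, ((σ i : ℂ) * (f i (u t) * starRingEnd ℂ (u t i))).im := by
            rw [Finset.mul_sum]
        _ = 0 := by rw [h4, mul_zero]
    rw [key] at hre
    exact hre
  have hconst : g θ = g 0 := by
    apply is_const_of_deriv_eq_zero
    · exact fun t => (hderiv t).differentiableAt
    · exact fun t => (hderiv t).deriv
  have h0 : g 0 = (F z).re := by
    simp [hg_def, hu_def]
  show g θ = (F z).re
  rw [hconst, h0]
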